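/- arXiv:0806.2605 — 2 statements merged into one kernel-verified Lean document; each statement's English description precedes it below -/
import Mathlib

section
/- Let θ, α, ρ be vectors in a rational inner-product-like space with a symmetric bilinear form, with (α,α) = 0, 2(θ,α) = (θ,θ) ≠ 0, and (ρ,α) ≠ 0. Suppose for each positive integer N, r_N = (N²(θ,θ) + 2N(ρ,θ))/(N(θ,θ) + 2(ρ,α)) = N + 2((ρ,θ) − (ρ,α))/((θ,θ) + 2(ρ,α)/N). If (ρ,θ) ≠ (ρ,α), then r_N is not an integer for all sufficiently large N. -/
lemma int_dist_aux (j : ℤ) (c : ℚ) (h : (j:ℚ) ≠ c) : (1:ℚ)/c.den ≤ |(j:ℚ) - c| := by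
  have hden : (0:ℚ) < (c.den : ℚ) := by exact_mod_cast c.pos
  have key : (j:ℚ) - c = ((j * c.den - c.num : ℤ) : ℚ) / (c.den : ℚ) := by
    rw [eq_div_iff hden.ne']
    push_cast
    rw [sub_mul]
    congr 1
    exact_mod_cast (Rat.mul_den_eq_num c)
  have hnum : (j * (c.den:ℤ) - c.num : ℤ) ≠ 0 := by
    intro h0
    apply h
    have : (j:ℚ) - c = 0 := by rw [key, h0]; simp
    linarith [this]
  have h1 : (1:ℚ) ≤ |((j * c.den - c.num : ℤ) : ℚ)| := by
    rw [← Int.cast_abs]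
    exact_mod_cast Int.one_le_abs hnum
  rw [key, abs_div, abs_of_pos hden]
  gcongr

/-- Subcase 2: when (α,α) = 0, 2(θ,α) = (θ,θ) ≠ 0, (ρ,α) ≠ 0 and (ρ,θ) ≠ (ρ,α),
the solution r_N = (N²(θ,θ) + 2N(ρ,θ))/(N(θ,θ) + 2(ρ,α)) is not an integer for all
sufficiently large N. -/
theorem stmt_4 (V : Type*) [AddCommGroup V] [Module ℚ V]
    (B : V →ₗ[ℚ] V →ₗ[ℚ] ℚ) (hsymm : ∀ x y, B x y = B y x)
    (θ α ρ : V) (hαα : B α α = 0) (hθθ : B θ θ ≠ 0)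
    (hθα : 2 * (B θ α) = B θ θ) (hρα : B ρ α ≠ 0)
    (hne : B ρ θ ≠ B ρ α) :
    ∃ N₀ : ℕ, ∀ N : ℕ, N₀ ≤ N →
      ¬ ∃ m : ℤ,
        ((N : ℚ)^2 * (B θ θ) + 2 * (N : ℚ) * (B ρ θ))
          / ((N : ℚ) * (B θ θ) + 2 * (B ρ α)) = (m : ℚ) := by
  set t := B θ θ with ht
  set p := B ρ θ with hp
  set a := B ρ α with ha
  have hpa : p - a ≠ 0 := sub_ne_zero.mpr hne
  set c : ℚ := 2*(p-a)/t with hc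
  set K : ℚ := |4*a*(p-a)/t| with hK
  have hK0 : 0 < K := by
    rw [hK, abs_pos]
    exact div_ne_zero (by simp [hρα, hpa]) hθθ
  have hd0 : (0:ℚ) < (c.den:ℚ) := by exact_mod_cast c.pos
  have ht0 : (0:ℚ) < |t| := abs_pos.mpr hθθ
  obtain ⟨N₀, hN₀⟩ := exists_nat_gt ((2*|a| + K*c.den)/|t|)
  refine ⟨N₀, fun N hN hcontra => ?_⟩
  obtain ⟨m, hm⟩ := hcontra
  have hNbig : (2*|a| + K*c.den)/|t| < (N:ℚ) :=
    lt_of_lt_of_le hN₀ (by exact_mod_cast hN)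
  have hNlt : 2*|a| + K*c.den < (N:ℚ)*|t| := by rwa [div_lt_iff₀ ht0] at hNbig
  set D : ℚ := (N:ℚ)*t + 2*a with hD
  have hDlb : (N:ℚ)*|t| - 2*|a| ≤ |D| := by
    have h1 : |(N:ℚ)*t| - |-(2*a)| ≤ |(N:ℚ)*t - (-(2*a))| :=
      abs_sub_abs_le_abs_sub _ _
    rw [abs_neg, sub_neg_eq_add, abs_mul, abs_of_nonneg (by positivity : (0:ℚ) ≤ (N:ℚ))] at h1
    have h2 : |2*a| = 2*|a| := by rw [abs_mul]; norm_num
    linarith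
  have hDabs : K*c.den < |D| := by linarith
  have hDne : D ≠ 0 := by
    intro h0
    rw [h0, abs_zero] at hDabs
    nlinarith
  have heq : (N:ℚ)^2*t + 2*(N:ℚ)*p = (m:ℚ)*D := (div_eq_iff hDne).mp hm
  set j : ℤ := m - N with hjdef
  have hj : (j:ℚ)*D = 2*(N:ℚ)*(p-a) := by
    have hjc : (j:ℚ) = (m:ℚ) - (N:ℚ) := by push_cast [hjdef]; ring
    rw [hjc, sub_mul, ← heq, hD]
    ring
  have jval : (j:ℚ) = 2*(N:ℚ)*(p-a)/D := (eq_div_iff hDne).mpr hj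
  have diff : (j:ℚ) - c = -(4*a*(p-a))/(D*t) := by
    rw [jval, hc, hD]
    field_simp [show (N:ℚ)*t + 2*a ≠ 0 from hDne]
    ring
  have hne2 : (j:ℚ) ≠ c := by
    intro h0
    apply div_ne_zero (show -(4*a*(p-a)) ≠ 0 by simp [hρα, hpa])
      (mul_ne_zero hDne hθθ)
    rw [← diff, h0, sub_self]
  have habs : |(j:ℚ) - c| = K/|D| := by
    rw [diff, hK, ← abs_div, abs_eq_abs]
    right
    field_simp
  have hlt : |(j:ℚ) - c| < 1/(c.den:ℚ) := by
    rw [habs, div_lt_div_iff₀ (abs_pos.mpr hDne) hd0]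
    linarith
  exact absurd (int_dist_aux j c hne2) (not_le.mpr hlt)
end

section
/- Let V be a ℚ-vector space with symmetric bilinear form, and let θ, α, ρ ∈ V satisfy: (θ,θ) = 0, (ρ,θ) = 2, (α,θ) = 1, (α,ρ) = 2, (α,α) ∈ {0, 2}. Then for integers N ≥ 3 and r > N, the equation 2(ρ, rα − Nθ) = (rα − Nθ, rα − Nθ) has no solution r ∈ ℤ. -/
/-- D(n+2|n) obstruction: if (θ,θ) = 0, (ρ,θ) = 2, (α,θ) = 1, (α,ρ) = 2 and
(α,α) ∈ {0,2}, then for N ≥ 3 there is no integer r > N with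
2(ρ, rα − Nθ) = (rα − Nθ, rα − Nθ). -/
theorem stmt_11 (V : Type*) [AddCommGroup V] [Module ℚ V]
    (B : V →ₗ[ℚ] V →ₗ[ℚ] ℚ) (hsymm : ∀ x y, B x y = B y x)
    (θ α ρ : V) (hθθ : B θ θ = 0) (hρθ : B ρ θ = 2)
    (hαθ : B α θ = 1) (hαρ : B α ρ = 2) (hαα : B α α = 0 ∨ B α α = 2) :
    ∀ N : ℤ, 3 ≤ N → ∀ r : ℤ, N < r →
      2 * B ρ ((r : ℚ) • α - (N : ℚ) • θ)
        ≠ B ((r : ℚ) • α - (N : ℚ) • θ) ((r : ℚ) • α - (N : ℚ) • θ) := by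
  intro N hN r hr h
  have hρα : B ρ α = 2 := (hsymm ρ α) ▸ hαρ
  have hθα : B θ α = 1 := (hsymm θ α) ▸ hαθ
  simp only [map_sub, map_smul, LinearMap.sub_apply, LinearMap.smul_apply,
    smul_eq_mul, hρθ, hρα, hθα, hαθ, hθθ] at h
  have hNq : (3 : ℚ) ≤ (N : ℚ) := by exact_mod_cast hN
  have hrq : (N : ℚ) < (r : ℚ) := by exact_mod_cast hr
  rcases hαα with h0 | h0 <;> rw [h0] at h <;> nlinarith [sq_nonneg ((r:ℚ) - N), sq_nonneg ((r:ℚ) - 2)]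
end
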